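/- For all natural numbers γ ≥ 1 and n with 0 ≤ n ≤ γ − 1, the non-degeneracy determinant D_{γn} := (ω_n²·C_{γγγγ} − 2·ω_γ²·C_{γγnn})·(ω_{2γ−n}²·C_{γγγγ} − 2·ω_γ²·C_{γ,γ,2γ−n,2γ−n}) − (ω_γ²·C_{γ,2γ−n,γ,n})² satisfies D_{γn} = ω_n·ω_γ²·(n − 3 − 4γ)·(n − γ)², where n − 3 − 4γ and n − γ are interpreted as integers; in particular D_{γn} < 0, so D_{γn} ≠ 0. -/

import Mathlib

open MeasureTheory

/-- Chebyshev polynomials of the second kind, as real-valued functions. -/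
noncomputable def chebU : ℕ → ℝ → ℝ
  | 0, _ => 1
  | 1, y => 2 * y
  | n + 2, y => 2 * y * chebU (n + 1) y - chebU n y


/-- Fourier coefficients of the cubic conformal wave equation on the Einstein cylinder
in spherical symmetry. -/
noncomputable def Ccoef (i j k m : ℕ) : ℝ :=
  (2 / Real.pi) *
    ∫ y in (-1:ℝ)..1, chebU i y * chebU j y * chebU k y * chebU m y * Real.sqrt (1 - y ^ 2)

/-- The non-degeneracy determinant `D_{γn}` of the spherically symmetric conformal
cubic wave equation. -/
noncomputable def Dcw (γ n : ℕ) : ℝ :=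
  (((n:ℝ) + 1) ^ 2 * Ccoef γ γ γ γ - 2 * ((γ:ℝ) + 1) ^ 2 * Ccoef γ γ n n) *
      ((((2 * γ - n : ℕ):ℝ) + 1) ^ 2 * Ccoef γ γ γ γ -
        2 * ((γ:ℝ) + 1) ^ 2 * Ccoef γ γ (2 * γ - n) (2 * γ - n)) -
    (((γ:ℝ) + 1) ^ 2 * Ccoef γ (2 * γ - n) γ n) ^ 2

lemma chebU_continuous (n : ℕ) : Continuous (chebU n) := by
  induction n using Nat.twoStepInduction with
  | zero => simpa [chebU] using continuous_const
  | one =>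
    have h : Continuous fun y : ℝ => 2 * y := by fun_prop
    simpa [chebU] using h
  | more n h1 h2 =>
    show Continuous fun y => 2 * y * chebU (n + 1) y - chebU n y
    exact ((continuous_const.mul continuous_id).mul h2).sub h1

lemma chebU_cos (n : ℕ) (θ : ℝ) :
    chebU n (Real.cos θ) * Real.sin θ = Real.sin ((n + 1) * θ) := by
  induction n using Nat.twoStepInduction with
  | zero => simp [chebU]
  | one =>
    have e : chebU 1 (Real.cos θ) = 2 * Real.cos θ := rfl
    rw [e, show ((1:ℕ):ℝ) + 1 = 2 by norm_num, Real.sin_two_mul]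
    ring
  | more n h1 h2 =>
    have e : chebU (n + 2) (Real.cos θ)
        = 2 * Real.cos θ * chebU (n + 1) (Real.cos θ) - chebU n (Real.cos θ) := rfl
    rw [e]
    have key : Real.sin (((n:ℝ) + 2 + 1) * θ) + Real.sin (((n:ℝ) + 1) * θ)
        = 2 * Real.cos θ * Real.sin (((n:ℝ) + 1 + 1) * θ) := by
      rw [show ((n:ℝ) + 2 + 1) * θ = ((n:ℝ) + 1 + 1) * θ + θ by ring,
        show ((n:ℝ) + 1) * θ = ((n:ℝ) + 1 + 1) * θ - θ by ring,
        Real.sin_add, Real.sin_sub]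
      ring
    push_cast at h1 h2 ⊢
    linear_combination 2 * Real.cos θ * h2 - h1 - key

/-- Product recurrence for Chebyshev U. -/
lemma chebU_prod_rec (N : ℕ) : ∀ (M : ℕ) (y : ℝ),
    chebU (M + 1) y * chebU (N + 1) y = chebU M y * chebU N y + chebU (M + N + 2) y := by
  induction N using Nat.twoStepInduction with
  | zero =>
    intro M y
    show chebU (M + 1) y * (2 * y) = chebU M y * 1 + chebU (M + 2) y
    show chebU (M + 1) y * (2 * y) = chebU M y * 1 + (2 * y * chebU (M + 1) y - chebU M y)
    ring
  | one =>
    intro M y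
    show chebU (M + 1) y * chebU 2 y = chebU M y * (2 * y) + chebU (M + 3) y
    have e2 : chebU 2 y = 2 * y * (2 * y) - 1 := rfl
    have eM2 : chebU (M + 2) y = 2 * y * chebU (M + 1) y - chebU M y := rfl
    have eM3 : chebU (M + 3) y = 2 * y * chebU (M + 2) y - chebU (M + 1) y := rfl
    rw [e2, eM3, eM2]; ring
  | more N h1 h2 =>
    intro M y
    have eN3 : chebU (N + 3) y = 2 * y * chebU (N + 2) y - chebU (N + 1) y := rfl
    have eK : chebU (M + N + 4) y = 2 * y * chebU (M + N + 3) y - chebU (M + N + 2) y := rfl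
    have eN2 : chebU (N + 2) y = 2 * y * chebU (N + 1) y - chebU N y := rfl
    have hA : chebU (M + 1) y * chebU (N + 2) y
        = chebU M y * chebU (N + 1) y + chebU (M + N + 3) y := by
      simpa [show N + 1 + 1 = N + 2 by ring, show M + (N + 1) + 2 = M + N + 3 by ring]
        using h2 M y
    have hB := h1 M y
    show chebU (M + 1) y * chebU (N + 3) y = chebU M y * chebU (N + 2) y + chebU (M + N + 4) y
    have eK' : chebU (M + N + 4) y = 2 * y * chebU (M + N + 3) y - chebU (M + N + 2) y := by
      simpa [show M + (N + 1) + 2 = M + N + 3 by ring] using eK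
    rw [eN3, eK']
    linear_combination 2 * y * hA - hB - chebU M y * eN2

lemma chebU_mul (m n : ℕ) (y : ℝ) :
    chebU (m + n) y * chebU n y = ∑ j ∈ Finset.range (n + 1), chebU (m + 2 * j) y := by
  induction n with
  | zero => simp [chebU]
  | succ n ih =>
    have := chebU_prod_rec n (m + n) y
    rw [show m + (n + 1) = m + n + 1 by ring, this, ih,
      Finset.sum_range_succ _ (n + 1), show m + n + n + 2 = m + 2 * (n + 1) by ring]

lemma integral_cos_nat (k : ℕ) :
    ∫ θ in (0:ℝ)..Real.pi, Real.cos ((k:ℝ) * θ) = if k = 0 then Real.pi else 0 := by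
  rcases Nat.eq_zero_or_pos k with hk | hk
  · simp [hk]
  · have hk' : (k:ℝ) ≠ 0 := by positivity
    rw [if_neg (by omega)]
    rw [intervalIntegral.integral_comp_mul_left (fun x => Real.cos x) hk']
    simp [integral_cos, Real.sin_nat_mul_pi]

lemma integral_sin_mul_sin (p : ℕ) :
    ∫ θ in (0:ℝ)..Real.pi, Real.sin (((p:ℝ) + 1) * θ) * Real.sin θ
      = if p = 0 then Real.pi / 2 else 0 := by
  have hpt : ∀ θ : ℝ, Real.sin (((p:ℝ) + 1) * θ) * Real.sin θ
      = (Real.cos ((p:ℝ) * θ) - Real.cos (((p:ℝ) + 2) * θ)) / 2 := by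
    intro θ
    rw [show ((p:ℝ)) * θ = ((p:ℝ) + 1) * θ - θ by ring,
      show ((p:ℝ) + 2) * θ = ((p:ℝ) + 1) * θ + θ by ring, Real.cos_sub, Real.cos_add]
    ring
  simp_rw [hpt]
  have i1 : IntervalIntegrable (fun θ : ℝ => Real.cos ((p:ℝ) * θ)) volume 0 Real.pi :=
    (Real.continuous_cos.comp (continuous_const.mul continuous_id)).intervalIntegrable _ _
  have i2 : IntervalIntegrable (fun θ : ℝ => Real.cos (((p:ℝ) + 2) * θ)) volume 0 Real.pi :=
    (Real.continuous_cos.comp (continuous_const.mul continuous_id)).intervalIntegrable _ _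
  rw [intervalIntegral.integral_div, intervalIntegral.integral_sub i1 i2]
  have h1 := integral_cos_nat p
  have h2 := integral_cos_nat (p + 2)
  push_cast at h1 h2
  rw [h1, h2]
  split_ifs <;> ring

lemma Jval (e : ℕ) :
    ∫ y in (-1:ℝ)..1, chebU e y * Real.sqrt (1 - y ^ 2)
      = if e = 0 then Real.pi / 2 else 0 := by
  have hg : Continuous (fun y : ℝ => chebU e y * Real.sqrt (1 - y ^ 2)) :=
    (chebU_continuous e).mul (Real.continuous_sqrt.comp (by continuity))
  have hderiv : ∀ x ∈ Set.uIcc (0:ℝ) Real.pi, HasDerivAt Real.cos (-Real.sin x) x :=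
    fun x _ => Real.hasDerivAt_cos x
  have hcont : ContinuousOn (fun x : ℝ => -Real.sin x) (Set.uIcc (0:ℝ) Real.pi) :=
    (Real.continuous_sin.neg).continuousOn
  have key := intervalIntegral.integral_comp_smul_deriv hderiv hcont hg
  rw [Real.cos_zero, Real.cos_pi] at key
  have lhs_eq : ∫ x in (0:ℝ)..Real.pi,
      (-Real.sin x) • ((fun y : ℝ => chebU e y * Real.sqrt (1 - y ^ 2)) ∘ Real.cos) x
      = -∫ θ in (0:ℝ)..Real.pi, Real.sin (((e:ℝ) + 1) * θ) * Real.sin θ := by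
    rw [← intervalIntegral.integral_neg]
    apply intervalIntegral.integral_congr
    intro θ hθ
    rw [Set.uIcc_of_le Real.pi_nonneg] at hθ
    have hs : 0 ≤ Real.sin θ := Real.sin_nonneg_of_nonneg_of_le_pi hθ.1 hθ.2
    have hsq : Real.sqrt (1 - Real.cos θ ^ 2) = Real.sin θ := by
      rw [show 1 - Real.cos θ ^ 2 = Real.sin θ ^ 2 by
        have := Real.sin_sq_add_cos_sq θ; linarith, Real.sqrt_sq hs]
    have hU := chebU_cos e θ
    push_cast at hU
    simp only [Function.comp_apply, smul_eq_mul, hsq]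
    rw [← hU]
    ring
  rw [lhs_eq] at key
  rw [integral_sin_mul_sin] at key
  rw [show ∫ y in (1:ℝ)..(-1), chebU e y * Real.sqrt (1 - y ^ 2)
      = -∫ y in (-1:ℝ)..1, chebU e y * Real.sqrt (1 - y ^ 2) from
    intervalIntegral.integral_symm (-1) 1] at key
  linarith [key]

lemma Kval (m n : ℕ) :
    ∫ y in (-1:ℝ)..1, chebU (m + n) y * chebU n y * Real.sqrt (1 - y ^ 2)
      = if m = 0 then Real.pi / 2 else 0 := by
  have hpt : ∀ y : ℝ, chebU (m + n) y * chebU n y * Real.sqrt (1 - y ^ 2)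
      = ∑ j ∈ Finset.range (n + 1), chebU (m + 2 * j) y * Real.sqrt (1 - y ^ 2) := by
    intro y
    rw [chebU_mul, Finset.sum_mul]
  simp_rw [hpt]
  have hint : ∀ j : ℕ,
      IntervalIntegrable (fun y : ℝ => chebU j y * Real.sqrt (1 - y ^ 2))
        volume (-1) 1 := by
    intro j
    apply Continuous.intervalIntegrable
    exact (chebU_continuous j).mul (Real.continuous_sqrt.comp (by continuity))
  rw [intervalIntegral.integral_finset_sum (fun j _ => hint (m + 2 * j))]
  simp_rw [Jval]
  rcases Nat.eq_zero_or_pos m with hm | hm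
  · subst hm
    rw [if_pos rfl]
    rw [Finset.sum_eq_single 0]
    · simp
    · intro j _ hj
      rw [if_neg (by omega)]
    · intro h; simp at h
  · rw [if_neg (by omega)]
    apply Finset.sum_eq_zero
    intro j _
    rw [if_neg (by omega)]

lemma Kval2 (a b : ℕ) :
    ∫ y in (-1:ℝ)..1, chebU a y * chebU b y * Real.sqrt (1 - y ^ 2)
      = if a = b then Real.pi / 2 else 0 := by
  rcases le_total b a with h | h
  · obtain ⟨k, rfl⟩ := Nat.exists_eq_add_of_le h
    rw [show b + k = k + b from Nat.add_comm b k, Kval k b]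
    by_cases hk : k = 0
    · rw [if_pos hk, if_pos (by omega)]
    · rw [if_neg hk, if_neg (by omega)]
  · obtain ⟨k, rfl⟩ := Nat.exists_eq_add_of_le h
    have hc : ∀ y : ℝ, chebU a y * chebU (a + k) y * Real.sqrt (1 - y ^ 2)
        = chebU (k + a) y * chebU a y * Real.sqrt (1 - y ^ 2) := by
      intro y; rw [Nat.add_comm k a]; ring
    simp_rw [hc]
    rw [Kval k a]
    by_cases hk : k = 0
    · rw [if_pos hk, if_pos (by omega)]
    · rw [if_neg hk, if_neg (by omega)]

lemma Ccoef_calc (d b c : ℕ) : Ccoef (d + b) b (d + c) c = (min b c : ℝ) + 1 := by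
  unfold Ccoef
  have hpt : ∀ y : ℝ, chebU (d + b) y * chebU b y * chebU (d + c) y * chebU c y *
        Real.sqrt (1 - y ^ 2)
      = ∑ j ∈ Finset.range (b + 1), ∑ k ∈ Finset.range (c + 1),
          chebU (d + 2 * j) y * chebU (d + 2 * k) y * Real.sqrt (1 - y ^ 2) := by
    intro y
    rw [show chebU (d + b) y * chebU b y * chebU (d + c) y * chebU c y * Real.sqrt (1 - y ^ 2)
        = (chebU (d + b) y * chebU b y) * (chebU (d + c) y * chebU c y) * Real.sqrt (1 - y ^ 2)
        by ring,
      chebU_mul, chebU_mul, Finset.sum_mul_sum, Finset.sum_mul]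
    exact Finset.sum_congr rfl fun j _ => by rw [Finset.sum_mul]
  simp_rw [hpt]
  have hint : ∀ p q : ℕ,
      IntervalIntegrable (fun y : ℝ => chebU p y * chebU q y * Real.sqrt (1 - y ^ 2))
        volume (-1) 1 := by
    intro p q
    apply Continuous.intervalIntegrable
    exact ((chebU_continuous p).mul (chebU_continuous q)).mul
      (Real.continuous_sqrt.comp (by continuity))
  have hint2 : ∀ j : ℕ, IntervalIntegrable
      (fun y : ℝ => ∑ k ∈ Finset.range (c + 1),
        chebU (d + 2 * j) y * chebU (d + 2 * k) y * Real.sqrt (1 - y ^ 2))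
      volume (-1) 1 := by
    intro j
    apply Continuous.intervalIntegrable
    apply continuous_finset_sum
    intro k _
    exact ((chebU_continuous _).mul (chebU_continuous _)).mul
      (Real.continuous_sqrt.comp (by continuity))
  rw [intervalIntegral.integral_finset_sum (fun j _ => hint2 j)]
  have hinner : ∀ j : ℕ,
      (∫ y in (-1:ℝ)..1, ∑ k ∈ Finset.range (c + 1),
        chebU (d + 2 * j) y * chebU (d + 2 * k) y * Real.sqrt (1 - y ^ 2))
      = ∑ k ∈ Finset.range (c + 1),
          if j = k then Real.pi / 2 else 0 := by
    intro j
    rw [intervalIntegral.integral_finset_sum (fun k _ => hint (d + 2 * j) (d + 2 * k))]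
    apply Finset.sum_congr rfl
    intro k _
    rw [Kval2]
    by_cases hjk : j = k
    · rw [if_pos (by omega), if_pos hjk]
    · rw [if_neg (by omega), if_neg hjk]
  simp_rw [hinner, Finset.sum_ite_eq]
  have hmem : ∀ j : ℕ, ((if j ∈ Finset.range (c + 1) then Real.pi / 2 else 0))
      = if j ∈ Finset.range (c + 1) then Real.pi / 2 else 0 := fun _ => rfl
  rw [Finset.sum_ite_mem]
  have hrange : Finset.range (b + 1) ∩ Finset.range (c + 1)
      = Finset.range (min b c + 1) := by
    ext x; simp [Nat.lt_min]
  rw [hrange, Finset.sum_const, Finset.card_range, nsmul_eq_mul]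
  have hπ : Real.pi ≠ 0 := Real.pi_ne_zero
  push_cast
  field_simp

lemma Ccoef_comm12 (i j k m : ℕ) : Ccoef i j k m = Ccoef j i k m := by
  unfold Ccoef
  congr 1
  apply intervalIntegral.integral_congr
  intro y _
  ring

/-- Closed formula and strict negativity of the non-degeneracy determinant. -/
theorem Dcw_formula_and_neg (γ n : ℕ) (hγ : 1 ≤ γ) (hn : n + 1 ≤ γ) :
    Dcw γ n =
        ((n:ℝ) + 1) * ((γ:ℝ) + 1) ^ 2 * ((n:ℝ) - 3 - 4 * (γ:ℝ)) * ((n:ℝ) - (γ:ℝ)) ^ 2 ∧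
      Dcw γ n < 0 := by
  have hγ2 : n ≤ 2 * γ := by omega
  have h1 : Ccoef γ γ γ γ = (γ:ℝ) + 1 := by
    have := Ccoef_calc 0 γ γ
    simpa using this
  have h2 : Ccoef γ γ n n = (n:ℝ) + 1 := by
    have := Ccoef_calc 0 γ n
    rw [Nat.zero_add, Nat.zero_add, min_eq_right (Nat.cast_le.mpr (by omega : n ≤ γ))] at this
    exact this
  have h3 : Ccoef γ γ (2 * γ - n) (2 * γ - n) = (γ:ℝ) + 1 := by
    have := Ccoef_calc 0 γ (2 * γ - n)
    rw [Nat.zero_add, Nat.zero_add, min_eq_left (Nat.cast_le.mpr (by omega : γ ≤ 2 * γ - n))] at this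
    exact this
  have h4 : Ccoef γ (2 * γ - n) γ n = (n:ℝ) + 1 := by
    rw [Ccoef_comm12]
    have := Ccoef_calc (γ - n) γ n
    rw [show γ - n + γ = 2 * γ - n by omega, show γ - n + n = γ by omega,
      min_eq_right (Nat.cast_le.mpr (by omega : n ≤ γ))] at this
    exact this
  have hcast : ((2 * γ - n : ℕ):ℝ) = 2 * (γ:ℝ) - (n:ℝ) := by
    rw [Nat.cast_sub hγ2]; push_cast; ring
  have hformula : Dcw γ n =
      ((n:ℝ) + 1) * ((γ:ℝ) + 1) ^ 2 * ((n:ℝ) - 3 - 4 * (γ:ℝ)) * ((n:ℝ) - (γ:ℝ)) ^ 2 := by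
    unfold Dcw
    rw [h1, h2, h3, h4, hcast]
    ring
  refine ⟨hformula, ?_⟩
  rw [hformula]
  have hA : (n:ℝ) + 1 ≤ (γ:ℝ) := by exact_mod_cast hn
  have hn0 : (0:ℝ) ≤ (n:ℝ) := Nat.cast_nonneg n
  have hg1 : (1:ℝ) ≤ (γ:ℝ) := by exact_mod_cast hγ
  have hpos : (0:ℝ) < ((n:ℝ) + 1) * ((γ:ℝ) + 1) ^ 2 := by positivity
  have hneg : ((n:ℝ) - 3 - 4 * (γ:ℝ)) < 0 := by linarith
  have hsq : (0:ℝ) < ((n:ℝ) - (γ:ℝ)) ^ 2 := by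
    nlinarith [sq_nonneg ((n:ℝ) - (γ:ℝ) + 1)]
  exact mul_neg_of_neg_of_pos (mul_neg_of_pos_of_neg hpos hneg) hsq
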